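/- Suppose ∇_h E(ĥ; s, a) = 0 at ĥ = (ĥ^1, …, ĥ^{L-1}) (with ĥ^0 = s). Then for every l ∈ {1, …, L−1}, the REINFORCE parameter gradient at layer l admits the backpropagation-style chain factorization ∇_{W^l} log π_l(ĥ^{l-1}, ĥ^l; W^l) = (D_{W^l} g^l(ĥ^{l-1}; W^l))^T (D_{h^l} g^{l+1}(ĥ^l; W^{l+1}))^T (D_{h^{l+1}} g^{l+2}(ĥ^{l+1}; W^{l+2}))^T ⋯ (D_{h^{L-2}} g^{L-1}(ĥ^{L-2}; W^{L-1}))^T ∇_{h^{L-1}} log π_L(ĥ^{L-1}, a; W^L), where D denotes the Jacobian with respect to the indicated argument. -/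

import Mathlib

open InnerProductSpace


/-- The multivariate Gaussian density on `ℝⁿ` with mean `μ` and covariance `σ² I`. -/
noncomputable def gaussDensity {n : ℕ} (σ : ℝ) (μ y : EuclideanSpace ℝ (Fin n)) : ℝ :=
  (Real.sqrt (2 * Real.pi * σ ^ 2))⁻¹ ^ n * Real.exp (-‖y - μ‖ ^ 2 / (2 * σ ^ 2))

lemma gaussDensity_symm {n : ℕ} (σ : ℝ) (μ y : EuclideanSpace ℝ (Fin n)) :
    gaussDensity σ μ y = gaussDensity σ y μ := by
  unfold gaussDensity; rw [norm_sub_rev]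

lemma log_gaussDensity {n : ℕ} {σ : ℝ} (hσ : 0 < σ) (μ y : EuclideanSpace ℝ (Fin n)) :
    Real.log (gaussDensity σ μ y)
      = n * Real.log (Real.sqrt (2 * Real.pi * σ ^ 2))⁻¹ + (-‖y - μ‖ ^ 2 / (2 * σ ^ 2)) := by
  have h2 : (Real.sqrt (2 * Real.pi * σ ^ 2))⁻¹ ≠ 0 := by positivity
  rw [gaussDensity, Real.log_mul (pow_ne_zero _ h2) (Real.exp_ne_zero _), Real.log_pow,
    Real.log_exp]

lemma hasGradientAt_of_hasFDerivAt' {F : Type*} [NormedAddCommGroup F] [InnerProductSpace ℝ F]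
    [CompleteSpace F] {f : F → ℝ} {L : F →L[ℝ] ℝ} {v x : F}
    (h : HasFDerivAt f L x) (hv : ∀ u, L u = @inner ℝ _ _ v u) : HasGradientAt f v x := by
  have : L = toDual ℝ F v := ContinuousLinearMap.ext fun u => by rw [hv]; rfl
  rw [hasGradientAt_iff_hasFDerivAt, ← this]; exact h

lemma hasGradientAt_logGauss_mean {m n : ℕ} {σ : ℝ} (hσ : 0 < σ)
    (φ : EuclideanSpace ℝ (Fin m) → EuclideanSpace ℝ (Fin n)) (w : EuclideanSpace ℝ (Fin m))
    (hφ : DifferentiableAt ℝ φ w) (y : EuclideanSpace ℝ (Fin n)) :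
    HasGradientAt (fun w => Real.log (gaussDensity σ (φ w) y))
      ((ContinuousLinearMap.adjoint (fderiv ℝ φ w)) ((σ ^ 2)⁻¹ • (y - φ w))) w := by
  have hσ2 : (σ:ℝ) ^ 2 ≠ 0 := by positivity
  have heq : (fun w => Real.log (gaussDensity σ (φ w) y))
      = fun w => (n : ℝ) * Real.log (Real.sqrt (2 * Real.pi * σ ^ 2))⁻¹
          + (-(2 * σ ^ 2)⁻¹) * @inner ℝ _ _ (y - φ w) (y - φ w) := by
    funext w
    rw [log_gaussDensity hσ, real_inner_self_eq_norm_sq]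
    ring
  rw [heq]
  have hsub : HasFDerivAt (fun w => y - φ w) (-(fderiv ℝ φ w)) w := by
    have := (hasFDerivAt_const y w).sub hφ.hasFDerivAt; rw [zero_sub] at this; exact this
  have hin := (hsub.inner ℝ hsub).const_mul (-(2 * σ ^ 2)⁻¹)
  have hfd := hin.const_add ((n : ℝ) * Real.log (Real.sqrt (2 * Real.pi * σ ^ 2))⁻¹)
  refine hasGradientAt_of_hasFDerivAt' hfd fun u => ?_
  simp only [ContinuousLinearMap.coe_smul', Pi.smul_apply, ContinuousLinearMap.coe_comp',
    Function.comp_apply, ContinuousLinearMap.prod_apply, ContinuousLinearMap.neg_apply,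
    fderivInnerCLM_apply, smul_eq_mul]
  rw [ContinuousLinearMap.adjoint_inner_left, real_inner_smul_left, inner_neg_right,
    inner_neg_left, real_inner_comm ((fderiv ℝ φ w) u) (y - φ w)]
  ring

lemma hasGradientAt_logGauss_pt {n : ℕ} {σ : ℝ} (hσ : 0 < σ)
    (μ x₀ : EuclideanSpace ℝ (Fin n)) :
    HasGradientAt (fun x => Real.log (gaussDensity σ μ x)) ((σ ^ 2)⁻¹ • (μ - x₀)) x₀ := by
  have h := hasGradientAt_logGauss_mean hσ (fun x : EuclideanSpace ℝ (Fin n) => x) x₀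
    differentiableAt_fun_id μ
  simp only [← gaussDensity_symm] at h
  rw [fderiv_id'] at h
  simpa [ContinuousLinearMap.adjoint_id] using h

lemma hasGradientAt_add_const' {F : Type*} [NormedAddCommGroup F] [InnerProductSpace ℝ F]
    [CompleteSpace F] {f : F → ℝ} {f' x : F} (h : HasGradientAt f f' x) (c : ℝ) :
    HasGradientAt (fun x => f x + c) f' x := by
  rw [hasGradientAt_iff_hasFDerivAt] at h ⊢
  exact h.add_const c

lemma comb_grad {F : Type*} [NormedAddCommGroup F] [InnerProductSpace ℝ F]
    [CompleteSpace F] {A B : F → ℝ} {gA gB x : F} (hA : HasGradientAt A gA x)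
    (hB : HasGradientAt B gB x) (C : ℝ) :
    HasGradientAt (fun x => -(A x + B x) + C) (-(gA + gB)) x := by
  rw [hasGradientAt_iff_hasFDerivAt] at hA hB ⊢
  have := ((hA.add hB).neg).add_const C
  refine this.congr_fderiv ?_
  ext u
  simp [inner_add_left, inner_neg_left, toDual_apply_apply]

/-- In a multi-layer network of stochastic units whose hidden layers are
normally distributed, `π_l(h^{l-1}, h^l; W^l) = N(h^l; g^l(h^{l-1}; W^l), σ_l² I)`, with a
strictly positive output density `π_L(h^{L-1}, a; W^L)` differentiable in `h^{L-1}`, and energy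
`E(h; s, a) = −∑_{l=1}^{L} log π_l(h^{l-1}, h^l; W^l) + C(s, a)`: if `∇_h E(ĥ; s, a) = 0`
(with `ĥ^0 = s`), then for every `l ∈ {1, …, L−1}` the REINFORCE parameter gradient factorizes
as `∇_{W^l} log π_l(ĥ^{l-1}, ĥ^l; W^l) = (D_{W^l} g^l)ᵀ (D_{h^l} g^{l+1})ᵀ ⋯
(D_{h^{L-2}} g^{L-1})ᵀ ∇_{h^{L-1}} log π_L(ĥ^{L-1}, a; W^L)`.  The backward chain
`(D_{h^k} g^{k+1})ᵀ ⋯ ∇_{h^{L-1}} log π_L` is encoded as any family `v` with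
`v^{L-1} = ∇_{h^{L-1}} log π_L(ĥ^{L-1}, a; W^L)` and
`v^k = (D_{h^k} g^{k+1}(ĥ^k; W^{k+1}))ᵀ v^{k+1}` for `k < L−1`. -/
theorem stmt7 (L : ℕ) (n dpar : ℕ → ℕ)
    (g : (l : ℕ) → EuclideanSpace ℝ (Fin (dpar l)) →
      EuclideanSpace ℝ (Fin (n (l - 1))) → EuclideanSpace ℝ (Fin (n l)))
    (σ : ℕ → ℝ) (hσ : ∀ l ∈ Finset.Icc 1 (L - 1), 0 < σ l)
    (hgdiff₁ : ∀ l ∈ Finset.Icc 1 (L - 1), ∀ w, Differentiable ℝ (g l w))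
    (hgdiff₂ : ∀ l ∈ Finset.Icc 1 (L - 1), ∀ x, Differentiable ℝ (fun w => g l w x))
    (α : Type*) (πL : EuclideanSpace ℝ (Fin (n (L - 1))) → α → ℝ)
    (hπLpos : ∀ x b, 0 < πL x b)
    (hπLdiff : ∀ b, Differentiable ℝ (fun x => πL x b))
    (W : (l : ℕ) → EuclideanSpace ℝ (Fin (dpar l)))
    (s : EuclideanSpace ℝ (Fin (n 0))) (a : α) (C : ℝ)
    (hhat : (l : ℕ) → EuclideanSpace ℝ (Fin (n l))) (hs : hhat 0 = s)
    (hstat : ∀ k ∈ Finset.Icc 1 (L - 1),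
      gradient (fun x : EuclideanSpace ℝ (Fin (n k)) =>
        -((∑ j ∈ Finset.Icc 1 (L - 1),
            Real.log (gaussDensity (σ j) (g j (W j) (Function.update hhat k x (j - 1)))
              (Function.update hhat k x j)))
          + Real.log (πL (Function.update hhat k x (L - 1)) a)) + C) (hhat k) = 0)
    (v : (k : ℕ) → EuclideanSpace ℝ (Fin (n k)))
    (hvtop : v (L - 1) = gradient (fun x => Real.log (πL x a)) (hhat (L - 1)))
    (hvrec : ∀ k, k + 1 ≤ L - 1 →
      v k = (show EuclideanSpace ℝ (Fin (n k)) from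
        (ContinuousLinearMap.adjoint (fderiv ℝ (g (k + 1) (W (k + 1))) (hhat k)))
          (v (k + 1))))
    (l : ℕ) (hl : l ∈ Finset.Icc 1 (L - 1)) :
    gradient (fun w => Real.log (gaussDensity (σ l) (g l w (hhat (l - 1))) (hhat l))) (W l)
      = (ContinuousLinearMap.adjoint (fderiv ℝ (fun w => g l w (hhat (l - 1))) (W l))) (v l) := by
  classical
  obtain ⟨hl1, hl2⟩ := Finset.mem_Icc.mp hl
  have hL2 : 2 ≤ L := by omega
  -- abstract consequence of stationarity at layer k
  have stat : ∀ k, 1 ≤ k → k ≤ L - 1 →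
      ∀ (B : EuclideanSpace ℝ (Fin (n k)) → ℝ) (gB : EuclideanSpace ℝ (Fin (n k))),
      HasGradientAt B gB (hhat k) →
      (∀ x : EuclideanSpace ℝ (Fin (n k)),
        (∑ j ∈ Finset.Icc 1 (L - 1),
            Real.log (gaussDensity (σ j) (g j (W j) (Function.update hhat k x (j - 1)))
              (Function.update hhat k x j)))
          + Real.log (πL (Function.update hhat k x (L - 1)) a)
        = Real.log (gaussDensity (σ k) (g k (W k) (hhat (k - 1))) x) + B x) →
      ((σ k) ^ 2)⁻¹ • (hhat k - g k (W k) (hhat (k - 1))) = gB := by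
    intro k hk1 hk2 B gB hB hpt
    have kmem : k ∈ Finset.Icc 1 (L - 1) := Finset.mem_Icc.mpr ⟨hk1, hk2⟩
    have h0 := hstat k kmem
    have hfun : (fun x : EuclideanSpace ℝ (Fin (n k)) =>
        -((∑ j ∈ Finset.Icc 1 (L - 1),
            Real.log (gaussDensity (σ j) (g j (W j) (Function.update hhat k x (j - 1)))
              (Function.update hhat k x j)))
          + Real.log (πL (Function.update hhat k x (L - 1)) a)) + C)
        = fun x => -((Real.log (gaussDensity (σ k) (g k (W k) (hhat (k - 1))) x) + B x)) + C :=
      funext fun x => by rw [hpt x]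
    rw [hfun] at h0
    have hA := hasGradientAt_logGauss_pt (hσ k kmem) (g k (W k) (hhat (k - 1))) (hhat k)
    have hcomb := comb_grad hA hB C
    rw [hcomb.gradient] at h0
    have h2 : ((σ k) ^ 2)⁻¹ • (g k (W k) (hhat (k - 1)) - hhat k) + gB = 0 := neg_eq_zero.mp h0
    have h1 : gB = -(((σ k) ^ 2)⁻¹ • (g k (W k) (hhat (k - 1)) - hhat k)) :=
      eq_neg_of_add_eq_zero_right h2
    rw [h1, ← smul_neg, neg_sub]
  -- top layer
  have stat_top : ((σ (L - 1)) ^ 2)⁻¹ •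
      (hhat (L - 1) - g (L - 1) (W (L - 1)) (hhat (L - 1 - 1))) = v (L - 1) := by
    rw [hvtop]
    have hdiff : DifferentiableAt ℝ (fun x => Real.log (πL x a)) (hhat (L - 1)) :=
      (hπLdiff a (hhat (L - 1))).log (ne_of_gt (hπLpos _ a))
    refine stat (L - 1) (by omega) le_rfl _ _
      (hasGradientAt_add_const' hdiff.hasGradientAt
        (∑ j ∈ (Finset.Icc 1 (L - 1)).erase (L - 1),
          Real.log (gaussDensity (σ j) (g j (W j) (hhat (j - 1))) (hhat j)))) (fun x => ?_)
    have hmem : L - 1 ∈ Finset.Icc 1 (L - 1) := Finset.mem_Icc.mpr ⟨by omega, le_rfl⟩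
    have hsum : (∑ j ∈ Finset.Icc 1 (L - 1),
          Real.log (gaussDensity (σ j) (g j (W j) (Function.update hhat (L - 1) x (j - 1)))
            (Function.update hhat (L - 1) x j)))
        = Real.log (gaussDensity (σ (L - 1))
            (g (L - 1) (W (L - 1)) (Function.update hhat (L - 1) x (L - 1 - 1)))
            (Function.update hhat (L - 1) x (L - 1)))
          + ∑ j ∈ (Finset.Icc 1 (L - 1)).erase (L - 1),
            Real.log (gaussDensity (σ j) (g j (W j) (Function.update hhat (L - 1) x (j - 1)))
              (Function.update hhat (L - 1) x j)) := (Finset.add_sum_erase _ _ hmem).symm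
    rw [hsum]
    have hR : (∑ j ∈ (Finset.Icc 1 (L - 1)).erase (L - 1),
          Real.log (gaussDensity (σ j) (g j (W j) (Function.update hhat (L - 1) x (j - 1)))
            (Function.update hhat (L - 1) x j)))
        = ∑ j ∈ (Finset.Icc 1 (L - 1)).erase (L - 1),
          Real.log (gaussDensity (σ j) (g j (W j) (hhat (j - 1))) (hhat j)) :=
      Finset.sum_congr rfl fun j hj => by
        obtain ⟨hne, hmem'⟩ := Finset.mem_erase.mp hj
        obtain ⟨hj1, hj2⟩ := Finset.mem_Icc.mp hmem'
        rw [Function.update_of_ne (by omega), Function.update_of_ne hne]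
    rw [hR, Function.update_self, Function.update_of_ne (by omega : L - 1 - 1 ≠ L - 1)]
    ring
  -- recursive layers
  have stat_rec : ∀ k, 1 ≤ k → k + 1 ≤ L - 1 →
      ((σ k) ^ 2)⁻¹ • (hhat k - g k (W k) (hhat (k - 1)))
        = (ContinuousLinearMap.adjoint (fderiv ℝ (g (k + 1) (W (k + 1))) (hhat k)))
            (((σ (k + 1)) ^ 2)⁻¹ • (hhat (k + 1) - g (k + 1) (W (k + 1)) (hhat k))) := by
    intro k hk1 hk2
    have k1mem : k + 1 ∈ Finset.Icc 1 (L - 1) := Finset.mem_Icc.mpr ⟨by omega, hk2⟩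
    have hB := hasGradientAt_logGauss_mean (hσ (k + 1) k1mem) (g (k + 1) (W (k + 1))) (hhat k)
      (hgdiff₁ (k + 1) k1mem (W (k + 1)) (hhat k)) (hhat (k + 1))
    refine stat k hk1 (by omega) _ _
      (hasGradientAt_add_const' hB
        ((∑ j ∈ ((Finset.Icc 1 (L - 1)).erase k).erase (k + 1),
          Real.log (gaussDensity (σ j) (g j (W j) (hhat (j - 1))) (hhat j)))
          + Real.log (πL (hhat (L - 1)) a))) (fun x => ?_)
    have kmem : k ∈ Finset.Icc 1 (L - 1) := Finset.mem_Icc.mpr ⟨hk1, by omega⟩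
    have k1mem' : k + 1 ∈ (Finset.Icc 1 (L - 1)).erase k :=
      Finset.mem_erase.mpr ⟨by omega, k1mem⟩
    have hsum : (∑ j ∈ Finset.Icc 1 (L - 1),
          Real.log (gaussDensity (σ j) (g j (W j) (Function.update hhat k x (j - 1)))
            (Function.update hhat k x j)))
        = Real.log (gaussDensity (σ k)
            (g k (W k) (Function.update hhat k x (k - 1))) (Function.update hhat k x k))
          + (Real.log (gaussDensity (σ (k + 1))
              (g (k + 1) (W (k + 1)) (Function.update hhat k x (k + 1 - 1)))
              (Function.update hhat k x (k + 1)))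
            + ∑ j ∈ ((Finset.Icc 1 (L - 1)).erase k).erase (k + 1),
              Real.log (gaussDensity (σ j) (g j (W j) (Function.update hhat k x (j - 1)))
                (Function.update hhat k x j))) := by
      rw [← Finset.add_sum_erase _ _ kmem, ← Finset.add_sum_erase _ _ k1mem']
    rw [hsum]
    have hR : (∑ j ∈ ((Finset.Icc 1 (L - 1)).erase k).erase (k + 1),
          Real.log (gaussDensity (σ j) (g j (W j) (Function.update hhat k x (j - 1)))
            (Function.update hhat k x j)))
        = ∑ j ∈ ((Finset.Icc 1 (L - 1)).erase k).erase (k + 1),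
          Real.log (gaussDensity (σ j) (g j (W j) (hhat (j - 1))) (hhat j)) :=
      Finset.sum_congr rfl fun j hj => by
        obtain ⟨hne1, hj'⟩ := Finset.mem_erase.mp hj
        obtain ⟨hne2, hmem'⟩ := Finset.mem_erase.mp hj'
        obtain ⟨hj1, hj2⟩ := Finset.mem_Icc.mp hmem'
        rw [Function.update_of_ne (by omega), Function.update_of_ne hne2]
    have h4 : Function.update hhat k x (k + 1 - 1) = x := Function.update_self k x hhat
    rw [hR, h4, Function.update_self, Function.update_of_ne (by omega : k - 1 ≠ k),
      Function.update_of_ne (by omega : k + 1 ≠ k),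
      Function.update_of_ne (by omega : L - 1 ≠ k)]
    ring
  -- downward induction
  have key : ∀ d k, 1 ≤ k → k + d = L - 1 →
      ((σ k) ^ 2)⁻¹ • (hhat k - g k (W k) (hhat (k - 1))) = v k := by
    intro d
    induction d with
    | zero =>
      intro k hk1 hk2
      have hk : k = L - 1 := by omega
      subst hk
      exact stat_top
    | succ d ih =>
      intro k hk1 hk2
      have h2 : k + 1 ≤ L - 1 := by omega
      rw [stat_rec k hk1 h2, hvrec k h2]
      exact congrArg _ (ih (k + 1) (by omega) (by omega))
  have hmain := (hasGradientAt_logGauss_mean (hσ l hl) (fun w => g l w (hhat (l - 1))) (W l)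
    (hgdiff₂ l hl (hhat (l - 1)) (W l)) (hhat l)).gradient
  rw [hmain]
  exact congrArg _ (key (L - 1 - l) l hl1 (by omega))
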